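/- The Pfaffian of the (2n+2m)×(2n+2m) block skew-symmetric matrix [[M, V],[−V^T, 0]] vanishes whenever 2m > 2n, where M is a 2n×2n skew-symmetric matrix and V is a 2n×2m matrix. -/

import Mathlib

open Finset Matrix

/-- The Pfaffian of a `2n × 2n` skew-symmetric matrix. -/
noncomputable def pfaffian {K : Type*} [Field K] (n : ℕ)
    (A : Matrix (Fin (2 * n)) (Fin (2 * n)) K) : K :=
  ((2 : K) ^ n * (n.factorial : K))⁻¹ *
    ∑ σ : Equiv.Perm (Fin (2 * n)),
      ((Equiv.Perm.sign σ : ℤ) : K) *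
        ∏ i : Fin n,
          A (σ ⟨2 * i.val, by have := i.isLt; omega⟩)
            (σ ⟨2 * i.val + 1, by have := i.isLt; omega⟩)

lemma perm_apply_of_inv_val {N : ℕ} (σ : Equiv.Perm (Fin N)) (c : ℕ) (hc : c < N)
    (k : Fin N) (h : (σ⁻¹ k).val = c) : σ ⟨c, hc⟩ = k := by
  have : (⟨c, hc⟩ : Fin N) = σ⁻¹ k := Fin.ext h.symm
  rw [this, ← Equiv.Perm.mul_apply, mul_inv_cancel, Equiv.Perm.one_apply]

lemma pair_of_div_eq {N : ℕ} (σ : Equiv.Perm (Fin (2 * N))) (k1 k2 : Fin (2 * N))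
    (hne : k1 ≠ k2) (h : (σ⁻¹ k1).val / 2 = (σ⁻¹ k2).val / 2) :
    ∃ t : Fin N,
      (σ ⟨2 * t.val, by have := t.isLt; omega⟩ = k1 ∧
        σ ⟨2 * t.val + 1, by have := t.isLt; omega⟩ = k2) ∨
      (σ ⟨2 * t.val, by have := t.isLt; omega⟩ = k2 ∧
        σ ⟨2 * t.val + 1, by have := t.isLt; omega⟩ = k1) := by
  have hab : (σ⁻¹ k1).val ≠ (σ⁻¹ k2).val := by
    intro hh
    exact hne (by
      have h2 : σ⁻¹ k1 = σ⁻¹ k2 := Fin.ext hh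
      have h3 := congrArg σ h2
      simpa using h3)
  have halt : (σ⁻¹ k1).val < 2 * N := (σ⁻¹ k1).isLt
  have hblt : (σ⁻¹ k2).val < 2 * N := (σ⁻¹ k2).isLt
  refine ⟨⟨(σ⁻¹ k1).val / 2, by omega⟩, ?_⟩
  have hcase : ((σ⁻¹ k1).val = 2 * ((σ⁻¹ k1).val / 2) ∧ (σ⁻¹ k2).val = 2 * ((σ⁻¹ k1).val / 2) + 1) ∨
      ((σ⁻¹ k2).val = 2 * ((σ⁻¹ k1).val / 2) ∧ (σ⁻¹ k1).val = 2 * ((σ⁻¹ k1).val / 2) + 1) := by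
    omega
  rcases hcase with ⟨hA, hB⟩ | ⟨hB, hA⟩
  · exact Or.inl
      ⟨perm_apply_of_inv_val σ (2 * ((σ⁻¹ k1).val / 2)) (by omega) k1 (by omega),
        perm_apply_of_inv_val σ (2 * ((σ⁻¹ k1).val / 2) + 1) (by omega) k2 (by omega)⟩
  · exact Or.inr
      ⟨perm_apply_of_inv_val σ (2 * ((σ⁻¹ k1).val / 2)) (by omega) k2 (by omega),
        perm_apply_of_inv_val σ (2 * ((σ⁻¹ k1).val / 2) + 1) (by omega) k1 (by omega)⟩

/-- Pigeonhole: if `n < m`, any permutation of `Fin (2*(n+m))` has some pair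
`(2i, 2i+1)` both of whose images land in the bottom block `[2n, 2(n+m))`. -/
lemma pair_exists (n m : ℕ) (hnm : n < m) (σ : Equiv.Perm (Fin (2 * (n + m)))) :
    ∃ i : Fin (n + m),
      2 * n ≤ (σ ⟨2 * i.val, by have := i.isLt; omega⟩).val ∧
      2 * n ≤ (σ ⟨2 * i.val + 1, by have := i.isLt; omega⟩).val := by
  by_contra hcon
  push_neg at hcon
  have hinj : Function.Injective (fun j : Fin (2 * m) =>
      (⟨(σ⁻¹ ⟨2 * n + j.val, by omega⟩).val / 2, by
        have := (σ⁻¹ (⟨2 * n + j.val, by omega⟩ : Fin (2 * (n + m)))).isLt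
        omega⟩ : Fin (n + m))) := by
    intro j1 j2 hj
    by_contra hne
    simp only [Fin.mk.injEq] at hj
    have hk : (⟨2 * n + j1.val, by omega⟩ : Fin (2 * (n + m))) ≠ ⟨2 * n + j2.val, by omega⟩ := by
      simp only [ne_eq, Fin.mk.injEq]
      have := Fin.val_ne_of_ne hne
      omega
    obtain ⟨t, ⟨e1, e2⟩ | ⟨e1, e2⟩⟩ := pair_of_div_eq σ _ _ hk hj <;>
    · have h1 := hcon t
      rw [e1] at h1
      have h2 := h1 (by simp)
      rw [e2] at h2
      simp at h2
  have hcard := Fintype.card_le_of_injective _ hinj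
  simp only [Fintype.card_fin] at hcard
  omega

/-- The Pfaffian of the `(2n+2m) × (2n+2m)` block skew-symmetric matrix
`[[M, V], [-Vᵀ, 0]]` vanishes whenever `2m > 2n`. -/
theorem pfaffian_block_vanishes {K : Type*} [Field K] [CharZero K]
    (n m : ℕ) (hnm : n < m)
    (M : Matrix (Fin (2 * n)) (Fin (2 * n)) K) (hM : Mᵀ = -M)
    (V : Matrix (Fin (2 * n)) (Fin (2 * m)) K) :
    pfaffian (n + m)
      (Matrix.reindex (finSumFinEquiv.trans (finCongr (by ring : 2 * n + 2 * m = 2 * (n + m))))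
        (finSumFinEquiv.trans (finCongr (by ring : 2 * n + 2 * m = 2 * (n + m))))
        (Matrix.fromBlocks M V (-Vᵀ) 0)) = 0 := by
  unfold pfaffian
  rw [mul_eq_zero]
  right
  apply Finset.sum_eq_zero
  intro σ _
  rw [mul_eq_zero]
  right
  obtain ⟨i, h1, h2⟩ := pair_exists n m hnm σ
  apply Finset.prod_eq_zero (Finset.mem_univ i)
  have esymm : ∀ (k : Fin (2 * (n + m))), 2 * n ≤ k.val →
      (finSumFinEquiv.trans (finCongr (by ring : 2 * n + 2 * m = 2 * (n + m)))).symm k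
        = Sum.inr ⟨k.val - 2 * n, by have := k.isLt; omega⟩ := by
    intro k hk
    rw [Equiv.symm_apply_eq, Equiv.trans_apply, finSumFinEquiv_apply_right]
    apply Fin.ext
    simp [Fin.natAdd]
    omega
  rw [Matrix.reindex_apply, Matrix.submatrix_apply, esymm _ h1, esymm _ h2,
    Matrix.fromBlocks_apply₂₂]
  rfl
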